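/- uMPS(2, 2, 3) = Sym³(ℂ²): every symmetric tensor in (ℂ²)^{⊗3} can be written as T_3(M_0, M_1) for some 2×2 complex matrices M_0, M_1. -/

import Mathlib

open Matrix BigOperators

/-- The coefficient tensor of the uniform matrix product state
`T_N(M_0,…,M_{d-1}) = Σ tr(M_{i_1} ⋯ M_{i_N}) e_{i_1} ⊗ ⋯ ⊗ e_{i_N}`,
identified with its coefficient function `(Fin N → Fin d) → ℂ`. -/
noncomputable def uT (D d N : ℕ) (M : Fin d → Matrix (Fin D) (Fin D) ℂ) :
    (Fin N → Fin d) → ℂ :=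
  fun v => Matrix.trace (List.ofFn fun k => M (v k)).prod

/-- The set of uniform matrix product states in `(ℂ^d)^{⊗N}`. -/
noncomputable def uMPS (D d N : ℕ) : Set ((Fin N → Fin d) → ℂ) :=
  Set.range (uT D d N)

lemma exists_cubic (a b c d : ℂ) (ha : a ≠ 0) : ∃ x : ℂ, a*x^3 + b*x^2 + c*x + d = 0 := by
  have hdeg : (Polynomial.C a * Polynomial.X^3 + Polynomial.C b * Polynomial.X^2
      + Polynomial.C c * Polynomial.X + Polynomial.C d).degree = 3 := by compute_degree!
  obtain ⟨z, hz⟩ := IsAlgClosed.exists_root (k := ℂ) _ (by rw [hdeg]; norm_num)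
  exact ⟨z, by simpa [Polynomial.IsRoot] using hz⟩

lemma exists_quad (a b c : ℂ) (ha : a ≠ 0) : ∃ x : ℂ, a*x^2 + b*x + c = 0 := by
  have hdeg : (Polynomial.C a * Polynomial.X^2 + Polynomial.C b * Polynomial.X
      + Polynomial.C c).degree = 2 := by compute_degree!
  obtain ⟨z, hz⟩ := IsAlgClosed.exists_root (k := ℂ) _ (by rw [hdeg]; norm_num)
  exact ⟨z, by simpa [Polynomial.IsRoot] using hz⟩

lemma keyA (t0 t1 t2 t3 : ℂ) (h0 : t0 ≠ 0) :
    ∃ A B : Matrix (Fin 2) (Fin 2) ℂ,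
      (A*A*A).trace = t0 ∧ (A*A*B).trace = t1 ∧ (A*B*B).trace = t2 ∧ (B*B*B).trace = t3 := by
  obtain ⟨x, hx⟩ := exists_cubic 1 0 0 (-(t0/2)) one_ne_zero
  have hx3 : 2*x^3 = t0 := by linear_combination 2*hx
  have hxne : x ≠ 0 := by
    intro h; rw [h] at hx3; simp at hx3; exact h0 hx3.symm
  obtain ⟨u, hu⟩ := exists_cubic (x^2) (-3*t1) (6*x*t2) (-(4*x^2*t3)) (pow_ne_zero 2 hxne)
  obtain ⟨r, hr⟩ : ∃ r : ℂ, 2*x*r = t1 - x^2*u := ⟨(t1 - x^2*u)/(2*x), by field_simp⟩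
  obtain ⟨D, hD⟩ : ∃ D : ℂ, 2*x*D = x*u^2 + r*u - t2 := ⟨(x*u^2 + r*u - t2)/(2*x), by field_simp⟩
  obtain ⟨p, hp⟩ := exists_quad 1 (-u) (D+r) one_ne_zero
  have h5 : u^3 - 3*D*u - t3 = 0 := by
    have h4 : 4*x^2*(u^3 - 3*D*u - t3) = 0 := by linear_combination hu - 3*u^2*hr - 6*x*u*hD
    rcases mul_eq_zero.mp h4 with h | h
    · exact absurd h (by simp [hxne])
    · exact h
  refine ⟨!![x,1;0,x], !![p,1;r,u-p], ?_, ?_, ?_, ?_⟩ <;>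
    simp [Matrix.mul_fin_two, Matrix.trace_fin_two_of] <;> ring_nf
  · linear_combination hx3
  · linear_combination hr
  · linear_combination -hD + 2*x*hp
  · linear_combination h5 + 3*u*hp

lemma keyC (t1 t2 : ℂ) (h1 : t1 ≠ 0) :
    ∃ A B : Matrix (Fin 2) (Fin 2) ℂ,
      (A*A*A).trace = 0 ∧ (A*A*B).trace = t1 ∧ (A*B*B).trace = t2 ∧ (B*B*B).trace = 0 := by
  obtain ⟨q, hq⟩ := exists_quad (3*t1) (-3*t2) (-1) (by simpa using h1)
  have hqne : q ≠ 0 := by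
    intro h; rw [h] at hq; simp at hq
  obtain ⟨r, hr⟩ : ∃ r : ℂ, 3*q*r = -1 := ⟨-1/(3*q), by field_simp⟩
  refine ⟨!![0,1;t1,0], !![1,q;r,0], ?_, ?_, ?_, ?_⟩ <;>
    simp [Matrix.mul_fin_two, Matrix.trace_fin_two_of] <;> ring_nf
  · have h3 : 3*q*(r + t1*q - t2) = 0 := by linear_combination hr + hq
    rcases mul_eq_zero.mp h3 with h | h
    · exact absurd h (by simp [hqne])
    · linear_combination h
  · linear_combination hr

lemma key_swap {t0 t1 t2 t3 : ℂ}
    (h : ∃ A B : Matrix (Fin 2) (Fin 2) ℂ,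
      (A*A*A).trace = t3 ∧ (A*A*B).trace = t2 ∧ (A*B*B).trace = t1 ∧ (B*B*B).trace = t0) :
    ∃ A B : Matrix (Fin 2) (Fin 2) ℂ,
      (A*A*A).trace = t0 ∧ (A*A*B).trace = t1 ∧ (A*B*B).trace = t2 ∧ (B*B*B).trace = t3 := by
  obtain ⟨A, B, h0, h1, h2, h3⟩ := h
  refine ⟨B, A, h3, ?_, ?_, h0⟩
  · rw [Matrix.trace_mul_comm, ← mul_assoc]; exact h2
  · rw [mul_assoc, Matrix.trace_mul_comm]; exact h1

lemma key (t0 t1 t2 t3 : ℂ) :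
    ∃ A B : Matrix (Fin 2) (Fin 2) ℂ,
      (A*A*A).trace = t0 ∧ (A*A*B).trace = t1 ∧ (A*B*B).trace = t2 ∧ (B*B*B).trace = t3 := by
  by_cases h0 : t0 ≠ 0
  · exact keyA t0 t1 t2 t3 h0
  by_cases h3 : t3 ≠ 0
  · exact key_swap (keyA t3 t2 t1 t0 h3)
  push_neg at h0 h3
  subst h0; subst h3
  by_cases h1 : t1 ≠ 0
  · exact keyC t1 t2 h1
  by_cases h2 : t2 ≠ 0
  · exact key_swap (keyC t2 t1 h2)
  push_neg at h1 h2
  subst h1; subst h2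
  exact ⟨0, 0, by simp, by simp, by simp, by simp⟩

lemma tr3_cyc (A B C : Matrix (Fin 2) (Fin 2) ℂ) : (A*B*C).trace = (C*A*B).trace := by
  rw [Matrix.trace_mul_comm (A*B) C, ← mul_assoc]

lemma uT_count (A B : Matrix (Fin 2) (Fin 2) ℂ) (v : Fin 3 → Fin 2) :
    uT 2 2 3 ![A,B] v =
      if ∑ i, (v i).val = 0 then (A*A*A).trace
      else if ∑ i, (v i).val = 1 then (A*A*B).trace
      else if ∑ i, (v i).val = 2 then (A*B*B).trace
      else (B*B*B).trace := by
  obtain ⟨a,b,c,rfl⟩ : ∃ a b c, v = ![a,b,c] := ⟨v 0, v 1, v 2, by funext i; fin_cases i <;> rfl⟩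
  fin_cases a <;> fin_cases b <;> fin_cases c <;>
    norm_num [uT, List.ofFn_succ, Fin.sum_univ_three, ← mul_assoc, Matrix.cons_val_two, Matrix.tail_cons, Matrix.head_cons] <;>
    first
      | rfl
      | (rw [tr3_cyc]; try rw [tr3_cyc])

/-- `uMPS(2,2,3) = Sym³(ℂ²)`: the uniform matrix product states for `D = d = 2`, `N = 3`
are exactly the fully symmetric tensors in `(ℂ²)^{⊗3}`. -/
theorem stmt_16 :
    uMPS 2 2 3 = {T : (Fin 3 → Fin 2) → ℂ |
      ∀ (σ : Equiv.Perm (Fin 3)) (v : Fin 3 → Fin 2), T (v ∘ σ) = T v} := by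
  ext T
  simp only [uMPS, Set.mem_range, Set.mem_setOf_eq]
  constructor
  · rintro ⟨M, rfl⟩ σ v
    have hM : M = ![M 0, M 1] := by funext i; fin_cases i <;> rfl
    rw [hM, uT_count, uT_count]
    have hs : ∑ i, ((v ∘ σ) i).val = ∑ i, (v i).val := by
      simpa using Equiv.sum_comp σ (fun i => (v i).val)
    rw [hs]
  · intro hT
    obtain ⟨A, B, h0, h1, h2, h3⟩ := key (T ![0,0,0]) (T ![0,0,1]) (T ![0,1,1]) (T ![1,1,1])
    refine ⟨![A,B], ?_⟩
    funext v
    rw [uT_count]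
    obtain ⟨a,b,c,rfl⟩ : ∃ a b c, v = ![a,b,c] :=
      ⟨v 0, v 1, v 2, by funext i; fin_cases i <;> rfl⟩
    fin_cases a <;> fin_cases b <;> fin_cases c <;> norm_num [Fin.sum_univ_three, Matrix.cons_val_two, Matrix.tail_cons, Matrix.head_cons]
    · exact h0
    · exact h1
    · rw [h1, ← hT (Equiv.swap 1 2) ![0,0,1]]
      congr 1; decide
    · exact h2
    · rw [h1, ← hT (Equiv.swap 0 2) ![0,0,1]]
      congr 1; decide
    · rw [h2, ← hT (Equiv.swap 0 1) ![0,1,1]]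
      congr 1; decide
    · rw [h2, ← hT (Equiv.swap 0 2) ![0,1,1]]
      congr 1; decide
    · exact h3
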